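/- Let d ≥ 2, let s : {1,...,d} → ℝ satisfy s_1 = 1 and s_i/i nonincreasing in i, let 1 ≤ i₁ < i₂ ≤ d, δ ≥ 0, n ≥ 1, and suppose s_{i₁}/i₁ > s_{i₂}/i₂ and s_{i₂}/(i₂) < λ < s_{i₁}/i₁. Let x ∈ ℝ^d with x ≥ 0 satisfy: (a) i₁·x_{i₁} + i₂·x_{i₂} + Σ_{i < i₁} i·x_i = 1 − i₁/n, and (b) s_{i₁}·x_{i₁} + s_{i₂}·x_{i₂} + Σ_{i < i₁} s_i·x_i ≤ λ + δ, and x_i = 0 for all other indices. Define y*_{i₁} = (1/i₁)(λ − s_{i₂}/i₂)/(s_{i₁}/i₁ − s_{i₂}/i₂) and y*_{i₂} = (1/i₂)(s_{i₁}/i₁ − λ)/(s_{i₁}/i₁ − s_{i₂}/i₂). Then x_{i₁} − y*_{i₁} ≤ (δ/i₁ + s_{i₂}/(n·i₂)) / (s_{i₁}/i₁ − s_{i₂}/i₂) and y*_{i₂} − x_{i₂} ≤ (δ/i₂ + s_{i₁}/(n·i₂)) / (s_{i₁}/i₁ − s_{i₂}/i₂). -/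

import Mathlib

/-- The elimination argument bounding the deviation of x from the two-component
optimizer y*. -/
theorem stmt_11 (d : ℕ) (hd : 2 ≤ d) (s : ℕ → ℝ) (hs1 : s 1 = 1)
    (hratio : ∀ i j, 1 ≤ i → i ≤ j → j ≤ d → s j / (j : ℝ) ≤ s i / (i : ℝ))
    (i₁ i₂ : ℕ) (hi₁ : 1 ≤ i₁) (h12 : i₁ < i₂) (hi₂ : i₂ ≤ d)
    (δ : ℝ) (hδ : 0 ≤ δ) (n : ℕ) (hn : 1 ≤ n) (lam : ℝ)
    (hgap : s i₂ / (i₂ : ℝ) < s i₁ / (i₁ : ℝ))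
    (hlo : s i₂ / (i₂ : ℝ) < lam) (hhi : lam < s i₁ / (i₁ : ℝ))
    (x : ℕ → ℝ) (hx0 : ∀ i ∈ Finset.Icc 1 d, 0 ≤ x i)
    (ha : (i₁ : ℝ) * x i₁ + (i₂ : ℝ) * x i₂ + (∑ i ∈ Finset.Ico 1 i₁, (i : ℝ) * x i)
      = 1 - (i₁ : ℝ) / (n : ℝ))
    (hb : s i₁ * x i₁ + s i₂ * x i₂ + (∑ i ∈ Finset.Ico 1 i₁, s i * x i) ≤ lam + δ)
    (hxz : ∀ i ∈ Finset.Icc 1 d, i ≠ i₁ → i ≠ i₂ → i₁ ≤ i → x i = 0)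
    (y₁ y₂ : ℝ)
    (hy₁ : y₁ = (1 / (i₁ : ℝ)) * (lam - s i₂ / (i₂ : ℝ)) /
      (s i₁ / (i₁ : ℝ) - s i₂ / (i₂ : ℝ)))
    (hy₂ : y₂ = (1 / (i₂ : ℝ)) * (s i₁ / (i₁ : ℝ) - lam) /
      (s i₁ / (i₁ : ℝ) - s i₂ / (i₂ : ℝ))) :
    x i₁ - y₁ ≤ (δ / (i₁ : ℝ) + s i₂ / ((n : ℝ) * (i₂ : ℝ))) /
      (s i₁ / (i₁ : ℝ) - s i₂ / (i₂ : ℝ)) ∧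
    y₂ - x i₂ ≤ (δ / (i₂ : ℝ) + s i₁ / ((n : ℝ) * (i₂ : ℝ))) /
      (s i₁ / (i₁ : ℝ) - s i₂ / (i₂ : ℝ)) := by
  have hi1d : i₁ ≤ d := le_trans h12.le hi₂
  have hi1pos : (0:ℝ) < (i₁:ℝ) := by exact_mod_cast hi₁
  have hi2pos : (0:ℝ) < (i₂:ℝ) := by exact_mod_cast Nat.zero_lt_of_lt h12
  have hnpos : (0:ℝ) < (n:ℝ) := by exact_mod_cast hn
  have hg : (0:ℝ) < s i₁ / (i₁:ℝ) - s i₂ / (i₂:ℝ) := sub_pos.mpr hgap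
  set A := ∑ i ∈ Finset.Ico 1 i₁, (i : ℝ) * x i with hA
  set B := ∑ i ∈ Finset.Ico 1 i₁, s i * x i with hB
  -- ratio bounds for the low-index sums
  have h1 : s i₂ / (i₂:ℝ) * A ≤ B := by
    rw [hA, hB, Finset.mul_sum]
    apply Finset.sum_le_sum
    intro i hi
    obtain ⟨hi1, hi2⟩ := Finset.mem_Ico.mp hi
    have hipos : (0:ℝ) < (i:ℝ) := by exact_mod_cast hi1
    have hxi : 0 ≤ x i := hx0 i (Finset.mem_Icc.mpr ⟨hi1, le_trans (le_of_lt hi2) hi1d⟩)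
    have hr := hratio i i₂ hi1 (by omega) hi₂
    have hsi : s i / (i:ℝ) * (i:ℝ) = s i := div_mul_cancel₀ _ hipos.ne'
    nlinarith [mul_le_mul_of_nonneg_right hr (mul_nonneg hipos.le hxi)]
  have h2 : s i₁ / (i₁:ℝ) * A ≤ B := by
    rw [hA, hB, Finset.mul_sum]
    apply Finset.sum_le_sum
    intro i hi
    obtain ⟨hi1, hi2⟩ := Finset.mem_Ico.mp hi
    have hipos : (0:ℝ) < (i:ℝ) := by exact_mod_cast hi1
    have hxi : 0 ≤ x i := hx0 i (Finset.mem_Icc.mpr ⟨hi1, le_trans (le_of_lt hi2) hi1d⟩)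
    have hr := hratio i i₁ hi1 (le_of_lt hi2) hi1d
    have hsi : s i / (i:ℝ) * (i:ℝ) = s i := div_mul_cancel₀ _ hipos.ne'
    nlinarith [mul_le_mul_of_nonneg_right hr (mul_nonneg hipos.le hxi)]
  have e1x : s i₁ / (i₁:ℝ) * (i₁:ℝ) * x i₁ = s i₁ * x i₁ := by
    rw [div_mul_cancel₀ _ hi1pos.ne']
  have e2x : s i₂ / (i₂:ℝ) * (i₂:ℝ) * x i₂ = s i₂ * x i₂ := by
    rw [div_mul_cancel₀ _ hi2pos.ne']
  have e1x2 : s i₁ / (i₁:ℝ) * (i₂:ℝ) * x i₂ = s i₁ / (i₁:ℝ) * (i₂:ℝ) * x i₂ := rfl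
  -- eliminate x i₂ : multiply (a) by s i₂ / i₂ and subtract from (b)
  have hc2 : s i₂ / (i₂:ℝ) * ((i₁:ℝ) * x i₁ + (i₂:ℝ) * x i₂ + A)
      = s i₂ / (i₂:ℝ) * (1 - (i₁:ℝ) / (n:ℝ)) := by rw [ha]
  have e3 : s i₂ / (i₂:ℝ) * ((i₁:ℝ) / (n:ℝ)) = s i₂ * (i₁:ℝ) / ((n:ℝ) * (i₂:ℝ)) := by
    rw [div_mul_div_comm, mul_comm (i₂:ℝ) (n:ℝ)]
  have key1 : (i₁:ℝ) * (s i₁ / (i₁:ℝ) - s i₂ / (i₂:ℝ)) * x i₁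
      ≤ (lam - s i₂ / (i₂:ℝ)) + δ + s i₂ * (i₁:ℝ) / ((n:ℝ) * (i₂:ℝ)) := by
    linarith [hb, h1, hc2, e1x, e2x, e3]
  -- eliminate x i₁ : multiply (a) by s i₁ / i₁ and subtract from (b)
  have hc1 : s i₁ / (i₁:ℝ) * ((i₁:ℝ) * x i₁ + (i₂:ℝ) * x i₂ + A)
      = s i₁ / (i₁:ℝ) * (1 - (i₁:ℝ) / (n:ℝ)) := by rw [ha]
  have e5 : s i₁ / (i₁:ℝ) * ((i₁:ℝ) / (n:ℝ)) = s i₁ / (n:ℝ) := by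
    field_simp
  have key2 : (s i₁ / (i₁:ℝ) - lam) - δ - s i₁ / (n:ℝ)
      ≤ (i₂:ℝ) * (s i₁ / (i₁:ℝ) - s i₂ / (i₂:ℝ)) * x i₂ := by
    linarith [hb, h2, hc1, e1x, e2x, e5]
  constructor
  · rw [hy₁, sub_le_iff_le_add, ← add_div, le_div_iff₀ hg,
      ← mul_le_mul_iff_right₀ hi1pos]
    have E1 : (i₁:ℝ) * (δ / (i₁:ℝ)) = δ := by field_simp
    have E2 : (i₁:ℝ) * (1 / (i₁:ℝ) * (lam - s i₂ / (i₂:ℝ))) = lam - s i₂ / (i₂:ℝ) := by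
      field_simp
    have E3 : (i₁:ℝ) * (s i₂ / ((n:ℝ) * (i₂:ℝ))) = s i₂ * (i₁:ℝ) / ((n:ℝ) * (i₂:ℝ)) := by
      ring
    linarith [key1, E1, E2, E3]
  · rw [hy₂, sub_le_iff_le_add, div_le_iff₀ hg, ← mul_le_mul_iff_right₀ hi2pos]
    have E6 : (i₂:ℝ) * ((δ / (i₂:ℝ) + s i₁ / ((n:ℝ) * (i₂:ℝ))) /
        (s i₁ / (i₁:ℝ) - s i₂ / (i₂:ℝ)) * (s i₁ / (i₁:ℝ) - s i₂ / (i₂:ℝ)))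
        = δ + s i₁ / (n:ℝ) := by
      rw [div_mul_cancel₀ _ hg.ne']
      field_simp
    have E7 : (i₂:ℝ) * (1 / (i₂:ℝ) * (s i₁ / (i₁:ℝ) - lam)) = s i₁ / (i₁:ℝ) - lam := by
      field_simp
    linarith [key2, E6, E7]
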